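/- Let E, F ⊆ ℝⁿ be Lebesgue measurable sets of finite positive measure. Suppose there exist k₁, k₂ ∈ ℤ and n₁, n₂ ∈ ℤⁿ such that, modulo Lebesgue-null sets, 2^{k₁}F ⊆ E + 2πn₁ and E + 2πn₂ ⊆ 2^{k₂}F, and such that (E + 2πn₂) ∩ 2^{k₁}F is a null set. Then there exists a Lebesgue measurable set G ⊆ (E + 2πn₂) ∪ 2^{k₁}F such that G is 2πℤⁿ-translation congruent to E and 2-dilation congruent to F. -/

import Mathlib

open MeasureTheory Set
open scoped Real symmDiff

noncomputable section

/-- An a.e. (modulo Lebesgue-null sets) partition of the set `A` by the family `P`. -/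
def IsAEPartitionN {d : ℕ} {ι : Type*} (P : ι → Set (Fin d → ℝ)) (A : Set (Fin d → ℝ)) :
    Prop :=
  volume (A ∆ (⋃ i, P i)) = 0 ∧ ∀ i j : ι, i ≠ j → volume (P i ∩ P j) = 0

/-- The translate `A + 2πm` of `A ⊆ ℝⁿ` by the lattice vector `2πm`, `m ∈ ℤⁿ`. -/
def transN {d : ℕ} (m : Fin d → ℤ) (A : Set (Fin d → ℝ)) : Set (Fin d → ℝ) :=
  (fun x => x + fun i => 2 * Real.pi * (m i : ℝ)) '' A

/-- The dilate `2^k A` of `A ⊆ ℝⁿ`, `k ∈ ℤ`. -/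
def dilN {d : ℕ} (k : ℤ) (A : Set (Fin d → ℝ)) : Set (Fin d → ℝ) :=
  (fun x => ((2 : ℝ) ^ k) • x) '' A

/-- `A` is `2πℤⁿ`-translation congruent to `B`. -/
def TransCongruentN {d : ℕ} (A B : Set (Fin d → ℝ)) : Prop :=
  ∃ P : (Fin d → ℤ) → Set (Fin d → ℝ), (∀ m, MeasurableSet (P m)) ∧
    IsAEPartitionN P A ∧ IsAEPartitionN (fun m => transN m (P m)) B

/-- `A` is `2`-dilation congruent to `B`. -/
def DilCongruentN {d : ℕ} (A B : Set (Fin d → ℝ)) : Prop :=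
  ∃ P : ℤ → Set (Fin d → ℝ), (∀ k, MeasurableSet (P k)) ∧
    IsAEPartitionN P A ∧ IsAEPartitionN (fun k => dilN k (P k)) B

namespace Stmt9Aux
open scoped Pointwise

variable {d : ℕ}

def aff (r : ℝ) (v : Fin d → ℝ) (x : Fin d → ℝ) : Fin d → ℝ := r • x + v

lemma aff_comp (r r' : ℝ) (v v' x : Fin d → ℝ) :
    aff r v (aff r' v' x) = aff (r * r') (r • v' + v) x := by
  simp [aff, smul_add, smul_smul, add_assoc]

lemma aff_image_comp (r r' : ℝ) (v v' : Fin d → ℝ) (s : Set (Fin d → ℝ)) :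
    aff r v '' (aff r' v' '' s) = aff (r * r') (r • v' + v) '' s := by
  rw [← image_comp]
  exact image_congr' (fun x => aff_comp r r' v v' x)

lemma aff_one_zero (x : Fin d → ℝ) : aff 1 0 x = x := by simp [aff]

lemma aff_id_image (s : Set (Fin d → ℝ)) : aff 1 0 '' s = s := by
  rw [show aff (1:ℝ) (0 : Fin d → ℝ) = id from funext aff_one_zero, image_id]

lemma aff_injective {r : ℝ} (hr : r ≠ 0) (v : Fin d → ℝ) : Function.Injective (aff r v) := by
  intro x y h
  simpa [aff, hr, funext_iff] using h

lemma aff_inv_left {r : ℝ} (hr : r ≠ 0) (v x : Fin d → ℝ) :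
    aff r⁻¹ (-(r⁻¹ • v)) (aff r v x) = x := by
  rw [aff_comp, inv_mul_cancel₀ hr]
  simp [aff]

lemma aff_inv_right {r : ℝ} (hr : r ≠ 0) (v x : Fin d → ℝ) :
    aff r v (aff r⁻¹ (-(r⁻¹ • v)) x) = x := by
  rw [aff_comp, mul_inv_cancel₀ hr, smul_neg, smul_smul, mul_inv_cancel₀ hr]
  simp [aff]

lemma aff_measurable (r : ℝ) (v : Fin d → ℝ) : Measurable (aff r v) :=
  (measurable_id.const_smul r).add_const v

lemma aff_image_eq_preimage {r : ℝ} (hr : r ≠ 0) (v : Fin d → ℝ) (s : Set (Fin d → ℝ)) :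
    aff r v '' s = aff r⁻¹ (-(r⁻¹ • v)) ⁻¹' s := by
  ext y
  constructor
  · rintro ⟨x, hx, rfl⟩
    rwa [mem_preimage, aff_inv_left hr]
  · intro hy
    exact ⟨_, hy, aff_inv_right hr v y⟩

lemma aff_image_measurableSet {r : ℝ} (hr : r ≠ 0) (v : Fin d → ℝ) {s : Set (Fin d → ℝ)}
    (hs : MeasurableSet s) : MeasurableSet (aff r v '' s) := by
  rw [aff_image_eq_preimage hr]
  exact hs.preimage (aff_measurable _ _)

lemma vol_aff (r : ℝ) (v : Fin d → ℝ) (s : Set (Fin d → ℝ)) :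
    volume (aff r v '' s) = ENNReal.ofReal (|r| ^ d) * volume s := by
  have h : aff r v '' s = (fun x => x + v) '' ((fun x : Fin d → ℝ => r • x) '' s) := by
    rw [← image_comp]; rfl
  rw [h, Set.image_add_right, measure_preimage_add_right]
  rw [show (fun x : Fin d → ℝ => r • x) '' s = r • s from rfl, Measure.addHaar_smul]
  simp

lemma vol_aff_one (v : Fin d → ℝ) (s : Set (Fin d → ℝ)) :
    volume (aff 1 v '' s) = volume s := by
  rw [vol_aff]; simp

lemma vol_aff_null {r : ℝ} (v : Fin d → ℝ) {s : Set (Fin d → ℝ)} (hs : volume s = 0) :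
    volume (aff r v '' s) = 0 := by
  rw [vol_aff, hs, mul_zero]

lemma vol_aff_null_iff {r : ℝ} (hr : r ≠ 0) (v : Fin d → ℝ) (s : Set (Fin d → ℝ)) :
    volume (aff r v '' s) = 0 ↔ volume s = 0 := by
  rw [vol_aff, mul_eq_zero]
  simp [ENNReal.ofReal_eq_zero, pow_eq_zero_iff', abs_eq_zero, hr]

lemma transN_eq (m : Fin d → ℤ) (s : Set (Fin d → ℝ)) :
    transN m s = aff 1 (fun i => 2 * Real.pi * (m i : ℝ)) '' s := by
  simp only [transN, aff]
  refine image_congr' (fun x => ?_)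
  simp [aff]

lemma dilN_eq (k : ℤ) (s : Set (Fin d → ℝ)) :
    dilN k s = aff ((2:ℝ) ^ k) 0 '' s := by
  simp only [dilN, aff]
  refine image_congr' (fun x => ?_)
  simp [aff]

lemma transN_union (m : Fin d → ℤ) (s t : Set (Fin d → ℝ)) :
    transN m (s ∪ t) = transN m s ∪ transN m t := image_union _ _ _

lemma transN_empty (m : Fin d → ℤ) : transN (d := d) m ∅ = ∅ := image_empty _

lemma dilN_union (k : ℤ) (s t : Set (Fin d → ℝ)) :
    dilN k (s ∪ t) = dilN k s ∪ dilN k t := image_union _ _ _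

lemma dilN_empty (k : ℤ) : dilN (d := d) k ∅ = ∅ := image_empty _

lemma iUnion_pair {ι : Type*} [DecidableEq ι] (a b : ι) (U V : Set (Fin d → ℝ)) :
    (⋃ m, ((if m = a then U else ∅) ∪ (if m = b then V else ∅))) = U ∪ V := by
  apply subset_antisymm
  · exact iUnion_subset fun m =>
      union_subset_union (by split_ifs <;> simp) (by split_ifs <;> simp)
  · rintro x (hx | hx)
    · exact mem_iUnion.2 ⟨a, Or.inl (by simp [hx])⟩
    · exact mem_iUnion.2 ⟨b, Or.inr (by simp [hx])⟩

lemma isAEPartition_pair {ι : Type*} [DecidableEq ι] (a b : ι) (U V W : Set (Fin d → ℝ))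
    (hUV : volume (U ∩ V) = 0) (hW : volume (W ∆ (U ∪ V)) = 0) :
    IsAEPartitionN (fun m => (if m = a then U else ∅) ∪ (if m = b then V else ∅)) W := by
  constructor
  · rw [iUnion_pair]; exact hW
  · intro i j hij
    by_cases hia : i = a <;> by_cases hib : i = b <;> by_cases hja : j = a <;>
      by_cases hjb : j = b <;> simp_all [Set.inter_comm V U]

end Stmt9Aux

open Stmt9Aux in
/-- Lemma 5 of the paper.  Let `E, F ⊆ ℝⁿ` be measurable with finite
positive measure.  If there are `k₁, k₂ ∈ ℤ` and `n₁, n₂ ∈ ℤⁿ` with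
`2^{k₁}F ⊆ E + 2πn₁` and `E + 2πn₂ ⊆ 2^{k₂}F` modulo null sets, and
`(E + 2πn₂) ∩ 2^{k₁}F` null, then there is a measurable
`G ⊆ (E + 2πn₂) ∪ 2^{k₁}F` that is `2πℤⁿ`-translation congruent to `E` and
`2`-dilation congruent to `F`. -/
theorem stmt_9 (d : ℕ) (E F : Set (Fin d → ℝ))
    (hEmeas : MeasurableSet E) (hFmeas : MeasurableSet F)
    (hEpos : 0 < volume E) (hEfin : volume E < ⊤)
    (hFpos : 0 < volume F) (hFfin : volume F < ⊤)
    (k₁ k₂ : ℤ) (n₁ n₂ : Fin d → ℤ)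
    (h₁ : volume (dilN k₁ F \ transN n₁ E) = 0)
    (h₂ : volume (transN n₂ E \ dilN k₂ F) = 0)
    (h₃ : volume (transN n₂ E ∩ dilN k₁ F) = 0) :
    ∃ G : Set (Fin d → ℝ), MeasurableSet G ∧ G ⊆ transN n₂ E ∪ dilN k₁ F ∧
      TransCongruentN G E ∧ DilCongruentN G F := by
  classical
  have h2 : (2:ℝ) ≠ 0 := two_ne_zero
  set v₁ : Fin d → ℝ := fun i => 2 * Real.pi * (n₁ i : ℝ) with hv₁
  set v₂ : Fin d → ℝ := fun i => 2 * Real.pi * (n₂ i : ℝ) with hv₂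
  set w : Fin d → ℝ := v₂ - v₁ with hw
  set ρ : ℝ := (2:ℝ) ^ (k₁ - k₂) with hρdef
  have hρ : ρ ≠ 0 := zpow_ne_zero _ h2
  set E₁ := transN n₁ E with hE₁def
  set E₂ := transN n₂ E with hE₂def
  set F₁ := dilN k₁ F with hF₁def
  set F₂ := dilN k₂ F with hF₂def
  have hE₁aff : E₁ = aff 1 v₁ '' E := by rw [hE₁def, transN_eq, ← hv₁]
  have hE₂aff : E₂ = aff 1 v₂ '' E := by rw [hE₂def, transN_eq, ← hv₂]
  have hF₁aff : F₁ = aff ((2:ℝ)^k₁) 0 '' F := by rw [hF₁def, dilN_eq]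
  have hF₂aff : F₂ = aff ((2:ℝ)^k₂) 0 '' F := by rw [hF₂def, dilN_eq]
  have hE₁m : MeasurableSet E₁ := by
    rw [hE₁aff]; exact aff_image_measurableSet one_ne_zero _ hEmeas
  have hE₂m : MeasurableSet E₂ := by
    rw [hE₂aff]; exact aff_image_measurableSet one_ne_zero _ hEmeas
  have hF₁m : MeasurableSet F₁ := by
    rw [hF₁aff]; exact aff_image_measurableSet (zpow_ne_zero _ h2) _ hFmeas
  have hF₂m : MeasurableSet F₂ := by
    rw [hF₂aff]; exact aff_image_measurableSet (zpow_ne_zero _ h2) _ hFmeas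
  -- the bad set and its saturation
  set B₀ : Set (Fin d → ℝ) := (E₂ \ F₂) ∪ (F₁ \ E₁) with hB₀def
  have hB₀m : MeasurableSet B₀ := (hE₂m.diff hF₂m).union (hF₁m.diff hE₁m)
  have hB₀null : volume B₀ = 0 := measure_union_null h₂ h₁
  set N : Set (Fin d → ℝ) := ⋃ p : ℤ × ℚ, aff ((2:ℝ) ^ p.1) ((p.2 : ℝ) • w) '' B₀ with hNdef
  have hNnull : volume N = 0 := measure_iUnion_null fun p => vol_aff_null _ hB₀null
  have hNm : MeasurableSet N :=
    MeasurableSet.iUnion fun p => aff_image_measurableSet (zpow_ne_zero _ h2) _ hB₀m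
  have hB₀N : B₀ ⊆ N := by
    intro x hx
    refine mem_iUnion.2 ⟨((0:ℤ), (0:ℚ)), ?_⟩
    simpa [aff_id_image] using hx
  have haffN : ∀ (a : ℤ) (q : ℚ) (x : Fin d → ℝ), x ∈ N →
      aff ((2:ℝ) ^ a) ((q : ℝ) • w) x ∈ N := by
    intro a q x hx
    obtain ⟨p, hp⟩ := mem_iUnion.1 hx
    refine mem_iUnion.2 ⟨(a + p.1, (2:ℚ) ^ a * p.2 + q), ?_⟩
    have hmem : aff ((2:ℝ) ^ a) ((q:ℝ) • w) x ∈
        aff ((2:ℝ) ^ a) ((q:ℝ) • w) '' (aff ((2:ℝ) ^ p.1) ((p.2 : ℝ) • w) '' B₀) :=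
      mem_image_of_mem _ hp
    rw [aff_image_comp] at hmem
    have e1 : (2:ℝ) ^ (a + p.1) = (2:ℝ) ^ a * (2:ℝ) ^ p.1 := zpow_add₀ h2 a p.1
    have e2 : ((((2:ℚ) ^ a * p.2 + q : ℚ)) : ℝ) • w
        = (2:ℝ) ^ a • ((p.2 : ℝ) • w) + (q : ℝ) • w := by
      rw [smul_smul]
      rw [← add_smul]
      congr 1
      push_cast
      ring
    rw [e1, e2]
    exact hmem
  have hSmem : ∀ x : Fin d → ℝ, aff ρ 0 x ∈ N → x ∈ N := by
    intro x hx
    have h := haffN (-(k₁ - k₂)) 0 _ hx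
    have hxeq : aff ((2:ℝ) ^ (-(k₁ - k₂))) (((0:ℚ) : ℝ) • w) (aff ρ 0 x) = x := by
      rw [aff_comp, hρdef, ← zpow_add₀ h2]
      simp [aff]
    rwa [hxeq] at h
  have hTmem : ∀ y : Fin d → ℝ, aff 1 w y ∈ N → y ∈ N := by
    intro y hy
    have h := haffN 0 (-1) _ hy
    have hyeq : aff ((2:ℝ) ^ (0:ℤ)) (((-1:ℚ) : ℝ) • w) (aff 1 w y) = y := by
      rw [aff_comp]
      simp [aff]
    rwa [hyeq] at h
  -- the good sets
  set X : Set (Fin d → ℝ) := (E₂ ∩ F₂) \ N with hXdef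
  set Y : Set (Fin d → ℝ) := (F₁ ∩ E₁) \ N with hYdef
  have hXm : MeasurableSet X := (hE₂m.inter hF₂m).diff hNm
  have hYm : MeasurableSet Y := (hF₁m.inter hE₁m).diff hNm
  have hXE₂ : X ⊆ E₂ := fun x hx => hx.1.1
  have hXF₂ : X ⊆ F₂ := fun x hx => hx.1.2
  have hYF₁ : Y ⊆ F₁ := fun x hx => hx.1.1
  have hYE₁ : Y ⊆ E₁ := fun x hx => hx.1.2
  have hE₂X : E₂ \ X ⊆ N := by
    intro x hx
    by_cases hN : x ∈ N
    · exact hN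
    · by_cases hF : x ∈ F₂
      · exact absurd ⟨⟨hx.1, hF⟩, hN⟩ hx.2
      · exact hB₀N (Or.inl ⟨hx.1, hF⟩)
  have hF₁Y : F₁ \ Y ⊆ N := by
    intro x hx
    by_cases hN : x ∈ N
    · exact hN
    · by_cases hE : x ∈ E₁
      · exact absurd ⟨⟨hx.1, hE⟩, hN⟩ hx.2
      · exact hB₀N (Or.inr ⟨hx.1, hE⟩)
  -- the maps S = aff ρ 0, T = aff 1 w
  have hSF₂ : aff ρ 0 '' F₂ = F₁ := by
    rw [hF₂aff, hF₁aff, aff_image_comp, smul_zero, add_zero]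
    rw [show ρ * (2:ℝ)^k₂ = (2:ℝ)^k₁ by
      rw [hρdef, ← zpow_add₀ h2]; congr 1; ring]
  have hTE₁ : aff 1 w '' E₁ = E₂ := by
    rw [hE₁aff, hE₂aff, aff_image_comp, one_mul, one_smul]
    rw [show v₁ + w = v₂ by rw [hw]; abel]
  have hSXY : ∀ x ∈ X, aff ρ 0 x ∈ Y := by
    intro x hx
    have h1 : aff ρ 0 x ∈ F₁ := hSF₂ ▸ mem_image_of_mem _ (hXF₂ hx)
    have h2' : aff ρ 0 x ∉ N := fun h => hx.2 (hSmem x h)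
    have h3' : aff ρ 0 x ∈ E₁ := by
      by_contra hcon
      exact h2' (hB₀N (Or.inr ⟨h1, hcon⟩))
    exact ⟨⟨h1, h3'⟩, h2'⟩
  have hTYX : ∀ y ∈ Y, aff 1 w y ∈ X := by
    intro y hy
    have h1 : aff 1 w y ∈ E₂ := hTE₁ ▸ mem_image_of_mem _ (hYE₁ hy)
    have h2' : aff 1 w y ∉ N := fun h => hy.2 (hTmem y h)
    have h3' : aff 1 w y ∈ F₂ := by
      by_contra hcon
      exact h2' (hB₀N (Or.inl ⟨h1, hcon⟩))
    exact ⟨⟨h1, h3'⟩, h2'⟩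
  have hfTS : ∀ x : Fin d → ℝ, aff ρ w x = aff 1 w (aff ρ 0 x) := by
    intro x
    rw [aff_comp, one_mul, one_smul, zero_add]
  have hfX : ∀ x ∈ X, aff ρ w x ∈ X := by
    intro x hx
    rw [hfTS]
    exact hTYX _ (hSXY x hx)
  -- the Schroeder-Bernstein iteration
  set Δ : Set (Fin d → ℝ) := X \ (aff 1 w '' Y) with hΔdef
  have hΔm : MeasurableSet Δ := hXm.diff (aff_image_measurableSet one_ne_zero _ hYm)
  set A : Set (Fin d → ℝ) := ⋃ j : ℕ, (aff ρ w)^[j] '' Δ with hAdef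
  have hiter_m : ∀ j : ℕ, MeasurableSet ((aff ρ w)^[j] '' Δ) := by
    intro j
    induction j with
    | zero => simpa using hΔm
    | succ j ih =>
      rw [Function.iterate_succ', Set.image_comp]
      exact aff_image_measurableSet hρ _ ih
  have hAm : MeasurableSet A := MeasurableSet.iUnion hiter_m
  have hΔX : Δ ⊆ X := diff_subset
  have hiter_X : ∀ j : ℕ, (aff ρ w)^[j] '' Δ ⊆ X := by
    intro j
    induction j with
    | zero => simpa using hΔX
    | succ j ih =>
      rw [Function.iterate_succ', Set.image_comp]
      rintro _ ⟨x, hx, rfl⟩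
      exact hfX x (ih hx)
  have hAX : A ⊆ X := iUnion_subset hiter_X
  have hΔA : Δ ⊆ A := by
    intro x hx
    exact mem_iUnion.2 ⟨0, by simpa using hx⟩
  have hfA : ∀ x ∈ A, aff ρ w x ∈ A := by
    intro x hx
    obtain ⟨j, hj⟩ := mem_iUnion.1 hx
    refine mem_iUnion.2 ⟨j + 1, ?_⟩
    rw [Function.iterate_succ', Set.image_comp]
    exact mem_image_of_mem _ hj
  have hAΔf : ∀ x ∈ A, x ∈ Δ ∨ x ∈ aff ρ w '' A := by
    intro x hx
    obtain ⟨j, hj⟩ := mem_iUnion.1 hx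
    cases j with
    | zero => left; simpa using hj
    | succ j =>
      right
      rw [Function.iterate_succ', Set.image_comp] at hj
      exact image_mono (subset_iUnion (fun j : ℕ => (aff ρ w)^[j] '' Δ) j) hj
  set SA : Set (Fin d → ℝ) := aff ρ 0 '' A with hSAdef
  have hSAm : MeasurableSet SA := aff_image_measurableSet hρ _ hAm
  have hSA_Y : SA ⊆ Y := by
    rintro _ ⟨x, hx, rfl⟩
    exact hSXY x (hAX hx)
  -- the two key exact set identities
  have keyUnion : A ∪ aff 1 w '' (Y \ SA) = X := by
    apply subset_antisymm
    · apply union_subset hAX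
      rintro _ ⟨y, hy, rfl⟩
      exact hTYX y hy.1
    · intro x hxX
      by_cases hxT : x ∈ aff 1 w '' Y
      · obtain ⟨y, hyY, rfl⟩ := hxT
        by_cases hyS : y ∈ SA
        · obtain ⟨a, haA, rfl⟩ := hyS
          left
          rw [← hfTS]
          exact hfA a haA
        · right; exact mem_image_of_mem _ ⟨hyY, hyS⟩
      · left; exact hΔA ⟨hxX, hxT⟩
  have keyDisj : A ∩ aff 1 w '' (Y \ SA) = ∅ := by
    apply eq_empty_iff_forall_notMem.2
    rintro _ ⟨hxA, y, ⟨hyY, hyS⟩, rfl⟩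
    rcases hAΔf _ hxA with hΔ' | ⟨a, haA, hfa⟩
    · exact hΔ'.2 (mem_image_of_mem _ hyY)
    · rw [hfTS] at hfa
      exact hyS ⟨a, haA, aff_injective one_ne_zero w hfa⟩
  -- the candidate set G
  set G : Set (Fin d → ℝ) := A ∪ (Y \ SA) with hGdef
  have hGm : MeasurableSet G := hAm.union (hYm.diff hSAm)
  have hGsub : G ⊆ E₂ ∪ F₁ :=
    union_subset_union (hAX.trans hXE₂) fun y hy => hYF₁ hy.1
  have hAY0 : volume (A ∩ (Y \ SA)) = 0 := by
    apply measure_mono_null _ h₃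
    intro x hx
    exact ⟨hXE₂ (hAX hx.1), hYF₁ hx.2.1⟩
  have hGsymm : volume (G ∆ (A ∪ (Y \ SA))) = 0 := by
    rw [hGdef, symmDiff_self]
    simp
  refine ⟨G, hGm, hGsub, ?_, ?_⟩
  · -- translation congruence with E
    refine ⟨fun m => (if m = -n₂ then A else ∅) ∪ (if m = -n₁ then Y \ SA else ∅),
      ?_, isAEPartition_pair _ _ _ _ _ hAY0 hGsymm, ?_⟩
    · intro m
      apply MeasurableSet.union <;> split_ifs <;>
        first
          | exact hAm
          | exact hYm.diff hSAm
          | exact MeasurableSet.empty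
    · have hPmap : (fun m => transN m ((if m = -n₂ then A else ∅) ∪
          (if m = -n₁ then Y \ SA else ∅))) =
          fun m => (if m = -n₂ then transN (-n₂) A else ∅) ∪
            (if m = -n₁ then transN (-n₁) (Y \ SA) else ∅) := by
        funext m
        rw [transN_union]
        congr 1 <;> split_ifs with h <;> first | rw [h] | exact transN_empty m
      rw [hPmap]
      have hU' : aff 1 v₂ '' transN (-n₂) A = A := by
        rw [transN_eq, aff_image_comp, one_mul, one_smul]
        rw [show ((fun i => 2 * Real.pi * (((-n₂ : Fin d → ℤ) i : ℤ) : ℝ)) + v₂)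
            = (0 : Fin d → ℝ) by
          funext i; simp only [hv₂, Pi.add_apply, Pi.neg_apply, Pi.zero_apply]; push_cast; ring]
        exact aff_id_image A
      have hV' : aff 1 v₂ '' transN (-n₁) (Y \ SA) = aff 1 w '' (Y \ SA) := by
        rw [transN_eq, aff_image_comp, one_mul, one_smul]
        rw [show ((fun i => 2 * Real.pi * (((-n₁ : Fin d → ℤ) i : ℤ) : ℝ)) + v₂) = w by
          funext i; simp only [hw, hv₂, hv₁, Pi.add_apply, Pi.neg_apply, Pi.sub_apply]; push_cast; ring]
      apply isAEPartition_pair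
      · -- null pairwise intersection
        have himg : aff 1 v₂ '' (transN (-n₂) A ∩ transN (-n₁) (Y \ SA)) = ∅ := by
          rw [Set.image_inter (aff_injective one_ne_zero v₂), hU', hV', keyDisj]
        rw [image_eq_empty.1 himg]
        simp
      · -- a.e. covering of E
        have himg : aff 1 v₂ '' (E ∆ (transN (-n₂) A ∪ transN (-n₁) (Y \ SA)))
            = E₂ ∆ X := by
          rw [Set.image_symmDiff (aff_injective one_ne_zero v₂)]
          congr 1
          · exact hE₂aff.symm
          · rw [image_union, hU', hV', keyUnion]
        have hvol := vol_aff_one v₂ (E ∆ (transN (-n₂) A ∪ transN (-n₁) (Y \ SA)))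
        rw [himg] at hvol
        rw [← hvol]
        apply measure_mono_null _ hNnull
        rw [Set.symmDiff_def]
        apply union_subset hE₂X
        intro x hx
        exact absurd (hXE₂ hx.1) hx.2
  · -- dilation congruence with F
    refine ⟨fun k => (if k = -k₂ then A else ∅) ∪ (if k = -k₁ then Y \ SA else ∅),
      ?_, isAEPartition_pair _ _ _ _ _ hAY0 hGsymm, ?_⟩
    · intro k
      apply MeasurableSet.union <;> split_ifs <;>
        first
          | exact hAm
          | exact hYm.diff hSAm
          | exact MeasurableSet.empty
    · have hQmap : (fun k => dilN k ((if k = -k₂ then A else ∅) ∪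
          (if k = -k₁ then Y \ SA else ∅))) =
          fun k => (if k = -k₂ then dilN (-k₂) A else ∅) ∪
            (if k = -k₁ then dilN (-k₁) (Y \ SA) else ∅) := by
        funext k
        rw [dilN_union]
        congr 1 <;> split_ifs with h <;> first | rw [h] | exact dilN_empty k
      rw [hQmap]
      have hU'' : aff ((2:ℝ)^k₁) 0 '' dilN (-k₂) A = SA := by
        rw [dilN_eq, aff_image_comp, smul_zero, add_zero]
        rw [show (2:ℝ)^k₁ * (2:ℝ)^(-k₂) = ρ by
          rw [hρdef, ← zpow_add₀ h2, sub_eq_add_neg]]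
      have hV'' : aff ((2:ℝ)^k₁) 0 '' dilN (-k₁) (Y \ SA) = Y \ SA := by
        rw [dilN_eq, aff_image_comp, smul_zero, add_zero]
        rw [show (2:ℝ)^k₁ * (2:ℝ)^(-k₁) = (1:ℝ) by
          rw [← zpow_add₀ h2]; norm_num]
        exact aff_id_image _
      apply isAEPartition_pair
      · have himg : aff ((2:ℝ)^k₁) 0 '' (dilN (-k₂) A ∩ dilN (-k₁) (Y \ SA)) = ∅ := by
          rw [Set.image_inter (aff_injective (zpow_ne_zero _ h2) _), hU'', hV'']
          exact Set.inter_diff_self _ _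
        rw [image_eq_empty.1 himg]
        simp
      · have himg : aff ((2:ℝ)^k₁) 0 '' (F ∆ (dilN (-k₂) A ∪ dilN (-k₁) (Y \ SA)))
            = F₁ ∆ Y := by
          rw [Set.image_symmDiff (aff_injective (zpow_ne_zero _ h2) _)]
          congr 1
          · exact hF₁aff.symm
          · rw [image_union, hU'', hV'', union_diff_cancel hSA_Y]
        rw [← vol_aff_null_iff (r := (2:ℝ)^k₁) (zpow_ne_zero _ h2) 0, himg]
        apply measure_mono_null _ hNnull
        rw [Set.symmDiff_def]
        apply union_subset hF₁Y
        intro x hx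
        exact absurd (hYF₁ hx.1) hx.2
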